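/- For any vectors e1, e2 ∈ ℝ^d, any k ∈ {1,…,d}, and any ε > 0, one has 1 − FeatAgree(e1, e2; k) ≤ ε^{−1} · ℓ_Ftr(e2; e1, k). (Lemma 1: the feature-agreement surrogate loss upper-bounds the feature disagreement.) -/

import Mathlib

open Finset

/-- `rnk x i` is the rank (1-indexed) of `|x i|` among `|x 1|,…,|x d|` in descending
order, ties broken by index: it is the unique bijection `[d] → [d]` with
`rnk x i < rnk x j` iff `|x i| > |x j|`, or `|x i| = |x j|` and `i < j`. -/
noncomputable def rnk {d : ℕ} (x : Fin d → ℝ) (i : Fin d) : ℕ :=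
  (Finset.univ.filter (fun j => |x i| < |x j| ∨ (|x j| = |x i| ∧ j ≤ i))).card

/-- `TopFeatures(x;k)`: indices whose rank is at most `k`. -/
noncomputable def topFeat {d : ℕ} (x : Fin d → ℝ) (k : ℕ) : Finset (Fin d) :=
  Finset.univ.filter (fun i => rnk x i ≤ k)

/-- `sign(t) = 1` if `t ≥ 0`, else `-1`. -/
noncomputable def sgn (t : ℝ) : ℝ := if 0 ≤ t then 1 else -1

/-- Top-`k` feature agreement. -/
noncomputable def featAgree {d : ℕ} (e1 e2 : Fin d → ℝ) (k : ℕ) : ℝ :=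
  ((topFeat e1 k ∩ topFeat e2 k).card : ℝ) / k

/-- Top-`k` rank agreement. -/
noncomputable def rankAgree {d : ℕ} (e1 e2 : Fin d → ℝ) (k : ℕ) : ℝ :=
  (((topFeat e1 k ∩ topFeat e2 k).filter (fun i => rnk e1 i = rnk e2 i)).card : ℝ) / k

/-- Top-`k` sign agreement. -/
noncomputable def signAgree {d : ℕ} (e1 e2 : Fin d → ℝ) (k : ℕ) : ℝ :=
  (((topFeat e1 k ∩ topFeat e2 k).filter (fun i => sgn (e1 i) = sgn (e2 i))).card : ℝ) / k

/-- Top-`k` signed-rank agreement. -/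
noncomputable def signedRankAgree {d : ℕ} (e1 e2 : Fin d → ℝ) (k : ℕ) : ℝ :=
  (((topFeat e1 k ∩ topFeat e2 k).filter
      (fun i => sgn (e1 i) = sgn (e2 i) ∧ rnk e1 i = rnk e2 i)).card : ℝ) / k

/-- `ψ_feat(e2)`: max of `|e2 i|` over `i ∉ TopFeatures(e1;k)` when `k < d`, else `-ε`. -/
noncomputable def psiFeat {d : ℕ} (e1 e2 : Fin d → ℝ) (k : ℕ) (ε : ℝ) : ℝ :=
  if k < d then sSup ((fun i => |e2 i|) '' {i : Fin d | i ∉ topFeat e1 k}) else -ε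

/-- Feature-agreement surrogate loss `ℓ_Ftr(e2; e1, k)`. -/
noncomputable def lossFtr {d : ℕ} (e2 e1 : Fin d → ℝ) (k : ℕ) (ε : ℝ) : ℝ :=
  (∑ i ∈ topFeat e1 k, max 0 (psiFeat e1 e2 k ε - |e2 i| + ε)) / k

/-- `sortD a j` is the `j`-th largest entry of `a` (for `1 ≤ j ≤ d`). -/
noncomputable def sortD {d : ℕ} (a : Fin d → ℝ) (j : ℕ) : ℝ :=
  if h : d - j < d then (a ∘ Tuple.sort a) ⟨d - j, h⟩ else 0

/-- Rank-agreement surrogate loss `ℓ_Rnk(e2; e1, k)`: the sum over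
`I = {(j,i) : j ∈ [k], rank(e1,i) = j}` is realized as the sum over
`i ∈ TopFeatures(e1;k)` with `j = rnk e1 i`. -/
noncomputable def lossRnk {d : ℕ} (e2 e1 : Fin d → ℝ) (k : ℕ) (ε : ℝ) : ℝ :=
  (∑ i ∈ topFeat e1 k,
    max 0 (sortD (Function.update (fun t => |e2 t|) i (-ε)) (rnk e1 i) - |e2 i| + ε)) / k

/-- `ψ_sign(e2)`: max of `|e2 i|` over `i ∉ TopFeatures(e1;k)` when `k < d`, else `0`. -/
noncomputable def psiSign {d : ℕ} (e1 e2 : Fin d → ℝ) (k : ℕ) : ℝ :=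
  if k < d then sSup ((fun i => |e2 i|) '' {i : Fin d | i ∉ topFeat e1 k}) else 0

/-- Sign-agreement surrogate loss `ℓ_Sgn(e2; e1, k)`. -/
noncomputable def lossSgn {d : ℕ} (e2 e1 : Fin d → ℝ) (k : ℕ) (ε : ℝ) : ℝ :=
  (∑ i ∈ topFeat e1 k, max 0 (psiSign e1 e2 k - sgn (e1 i) * e2 i + ε)) / k

/-- Signed-rank-agreement surrogate loss `ℓ_SgnRnk(e2; e1, k)`. -/
noncomputable def lossSgnRnk {d : ℕ} (e2 e1 : Fin d → ℝ) (k : ℕ) (ε : ℝ) : ℝ :=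
  (∑ i ∈ topFeat e1 k,
    max 0 (sortD (Function.update (fun t => |e2 t|) i 0) (rnk e1 i) - sgn (e1 i) * e2 i + ε)) / k

section AuxRnk

attribute [local instance] Classical.propDecidable

variable {d : ℕ}

/-- strict "comes before" order -/
def blt (x : Fin d → ℝ) (j i : Fin d) : Prop :=
  |x i| < |x j| ∨ (|x j| = |x i| ∧ j < i)

lemma blt_irrefl (x : Fin d → ℝ) (i : Fin d) : ¬ blt x i i := by
  simp [blt]

lemma blt_trans {x : Fin d → ℝ} {a b c : Fin d} (h1 : blt x a b) (h2 : blt x b c) :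
    blt x a c := by
  rcases h1 with h1 | ⟨h1, h1'⟩ <;> rcases h2 with h2 | ⟨h2, h2'⟩
  · exact Or.inl (by linarith)
  · exact Or.inl (by linarith)
  · exact Or.inl (by linarith)
  · exact Or.inr ⟨by linarith, h1'.trans h2'⟩

lemma blt_total {x : Fin d → ℝ} {i j : Fin d} (h : i ≠ j) : blt x i j ∨ blt x j i := by
  rcases lt_trichotomy |x i| |x j| with h1 | h1 | h1
  · exact Or.inr (Or.inl h1)
  · rcases lt_or_gt_of_ne h with h2 | h2
    · exact Or.inl (Or.inr ⟨h1, h2⟩)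
    · exact Or.inr (Or.inr ⟨h1.symm, h2⟩)
  · exact Or.inl (Or.inl h1)

/-- number of strict predecessors -/
noncomputable def frk (x : Fin d → ℝ) (i : Fin d) : ℕ :=
  (Finset.univ.filter (fun j => blt x j i)).card

lemma rnk_eq_frk (x : Fin d → ℝ) (i : Fin d) : rnk x i = frk x i + 1 := by
  have hset : (Finset.univ.filter (fun j => |x i| < |x j| ∨ (|x j| = |x i| ∧ j ≤ i)))
      = insert i (Finset.univ.filter (fun j => blt x j i)) := by
    ext j
    rw [Finset.mem_insert, Finset.mem_filter, Finset.mem_filter]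
    simp only [mem_univ, true_and, blt]
    constructor
    · rintro (h | ⟨h, hle⟩)
      · exact Or.inr (Or.inl h)
      · rcases lt_or_eq_of_le hle with h' | h'
        · exact Or.inr (Or.inr ⟨h, h'⟩)
        · exact Or.inl h'
    · rintro (rfl | h | ⟨h, hlt⟩)
      · exact Or.inr ⟨rfl, le_refl _⟩
      · exact Or.inl h
      · exact Or.inr ⟨h, le_of_lt hlt⟩
  have hni : i ∉ Finset.univ.filter (fun j => blt x j i) := by
    exact fun h => blt_irrefl x i (Finset.mem_filter.mp h).2
  rw [rnk, hset, Finset.card_insert_of_notMem hni, frk]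

lemma frk_lt (x : Fin d → ℝ) (i : Fin d) : frk x i < d := by
  have h : (Finset.univ.filter (fun j => blt x j i)) ⊂ Finset.univ := by
    rw [Finset.ssubset_iff_of_subset (Finset.filter_subset _ _)]
    exact ⟨i, Finset.mem_univ i, fun h => blt_irrefl x i (Finset.mem_filter.mp h).2⟩
  simpa [frk] using Finset.card_lt_card h

lemma frk_lt_frk {x : Fin d → ℝ} {i j : Fin d} (h : blt x i j) : frk x i < frk x j := by
  have hsub : insert i (Finset.univ.filter (fun t => blt x t i))
      ⊆ Finset.univ.filter (fun t => blt x t j) := by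
    intro t ht
    rcases Finset.mem_insert.mp ht with rfl | ht
    · exact Finset.mem_filter.mpr ⟨Finset.mem_univ _, h⟩
    · exact Finset.mem_filter.mpr ⟨Finset.mem_univ _,
        blt_trans (Finset.mem_filter.mp ht).2 h⟩
  have hni : i ∉ Finset.univ.filter (fun t => blt x t i) := by
    exact fun h => blt_irrefl x i (Finset.mem_filter.mp h).2
  calc frk x i < frk x i + 1 := Nat.lt_succ_self _
    _ = (insert i (Finset.univ.filter (fun t => blt x t i))).card := by
        rw [Finset.card_insert_of_notMem hni, frk]
    _ ≤ _ := Finset.card_le_card hsub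

lemma frk_injective (x : Fin d → ℝ) : Function.Injective (frk x) := by
  intro i j h
  by_contra hne
  rcases blt_total (x := x) hne with hb | hb
  · exact absurd h (Nat.ne_of_lt (frk_lt_frk hb))
  · exact absurd h.symm (Nat.ne_of_lt (frk_lt_frk hb))

lemma topFeat_eq (x : Fin d → ℝ) (k : ℕ) :
    topFeat x k = Finset.univ.filter (fun i => frk x i < k) := by
  ext i
  simp [topFeat, rnk_eq_frk, Nat.succ_le_iff]

lemma card_topFeat (x : Fin d → ℝ) {k : ℕ} (hkd : k ≤ d) :
    (topFeat x k).card = k := by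
  rcases Nat.eq_zero_or_pos d with rfl | hd
  · interval_cases k; simp [topFeat]
  set F : Fin d → Fin d := fun i => ⟨frk x i, frk_lt x i⟩ with hF
  have hFinj : Function.Injective F := by
    intro a b hab
    exact frk_injective x (by simpa [hF, Fin.ext_iff] using hab)
  have hFsurj : Function.Surjective F := Finite.surjective_of_injective hFinj
  rw [topFeat_eq]
  have h1 : (Finset.univ.filter (fun i => frk x i < k)).card
      = (Finset.univ.filter (fun m : Fin d => (m : ℕ) < k)).card := by
    apply Finset.card_bij (fun i _ => F i)
    · intro i hi
      simp only [Finset.mem_filter, Finset.mem_univ, true_and] at hi ⊢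
      exact hi
    · intro a ha b hb hab
      exact hFinj hab
    · intro m hm
      obtain ⟨i, hi⟩ := hFsurj m
      refine ⟨i, ?_, hi⟩
      simp only [Finset.mem_filter, Finset.mem_univ, true_and] at hm ⊢
      rw [← hi] at hm
      exact hm
  rw [h1]
  have h2 : (Finset.univ.filter (fun m : Fin d => (m : ℕ) < k)).image Fin.val
      = Finset.range k := by
    ext n
    simp only [Finset.mem_image, Finset.mem_filter, Finset.mem_univ, true_and,
      Finset.mem_range]
    constructor
    · rintro ⟨m, hm, rfl⟩; exact hm
    · intro hn
      exact ⟨⟨n, lt_of_lt_of_le hn hkd⟩, hn, rfl⟩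
  have := Finset.card_image_of_injective
    (Finset.univ.filter (fun m : Fin d => (m : ℕ) < k)) Fin.val_injective
  rw [h2, Finset.card_range] at this
  omega

end AuxRnk

attribute [local instance] Classical.propDecidable

/-- **Lemma 1.** For any `e1, e2 ∈ ℝ^d`, `k ∈ {1,…,d}`, and `ε > 0`,
`1 − FeatAgree(e1,e2;k) ≤ ε⁻¹ · ℓ_Ftr(e2; e1, k)`. -/
theorem featureDisagreement_le_surrogate {d : ℕ} (e1 e2 : Fin d → ℝ) (k : ℕ)
    (hk : 1 ≤ k) (hkd : k ≤ d) (ε : ℝ) (hε : 0 < ε) :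
    1 - featAgree e1 e2 k ≤ ε⁻¹ * lossFtr e2 e1 k ε := by
  set A := topFeat e1 k with hA
  set B := topFeat e2 k with hB
  have hcardA : A.card = k := card_topFeat e1 hkd
  -- key: for i ∈ A \ B, ψ ≥ |e2 i| (and k < d)
  have hkey : ∀ i ∈ A \ B, ε ≤ max 0 (psiFeat e1 e2 k ε - |e2 i| + ε) := by
    intro i hi
    rw [Finset.mem_sdiff] at hi
    obtain ⟨hiA, hiB⟩ := hi
    -- frk e2 i ≥ k
    have hfrk : k ≤ frk e2 i := by
      have := hiB
      simp only [hB, topFeat_eq, Finset.mem_filter, Finset.mem_univ, true_and,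
        not_lt] at this
      exact this
    -- predecessors of i under e2 not all in A
    have hex : ∃ j, blt e2 j i ∧ j ∉ A := by
      by_contra hcon
      push_neg at hcon
      have hsub : Finset.univ.filter (fun j => blt e2 j i) ⊆ A.erase i := by
        intro j hj
        rw [Finset.mem_filter] at hj
        refine Finset.mem_erase.mpr ⟨?_, hcon j hj.2⟩
        rintro rfl
        exact blt_irrefl e2 _ hj.2
      have := Finset.card_le_card hsub
      rw [Finset.card_erase_of_mem hiA, hcardA] at this
      have : frk e2 i ≤ k - 1 := this
      omega
    obtain ⟨j, hbj, hjA⟩ := hex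
    have hkd' : k < d := by
      by_contra hcon
      have hkd2 : k = d := le_antisymm hkd (not_lt.mp hcon)
      have : frk e1 j < k := by rw [hkd2]; exact frk_lt e1 j
      refine hjA ?_
      rw [hA, topFeat_eq]
      exact Finset.mem_filter.mpr ⟨Finset.mem_univ _, this⟩
    have hji : |e2 i| ≤ |e2 j| := by
      rcases hbj with h | ⟨h, _⟩
      · exact le_of_lt h
      · exact le_of_eq h.symm
    have hpsi : |e2 j| ≤ psiFeat e1 e2 k ε := by
      rw [psiFeat, if_pos hkd']
      apply le_csSup
      · exact (Set.toFinite _).bddAbove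
      · exact ⟨j, hjA, rfl⟩
    have : ε ≤ psiFeat e1 e2 k ε - |e2 i| + ε := by linarith
    exact this.trans (le_max_right _ _)
  -- sum bound
  have hsum : ε * ((A \ B).card : ℝ)
      ≤ ∑ i ∈ A, max 0 (psiFeat e1 e2 k ε - |e2 i| + ε) := by
    calc ε * ((A \ B).card : ℝ) = ∑ _i ∈ A \ B, ε := by
          rw [Finset.sum_const, nsmul_eq_mul, mul_comm]
      _ ≤ ∑ i ∈ A \ B, max 0 (psiFeat e1 e2 k ε - |e2 i| + ε) :=
          Finset.sum_le_sum hkey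
      _ ≤ ∑ i ∈ A, max 0 (psiFeat e1 e2 k ε - |e2 i| + ε) := by
          apply Finset.sum_le_sum_of_subset_of_nonneg (Finset.sdiff_subset)
          intro i _ _
          exact le_max_left _ _
  have hk0 : (0 : ℝ) < k := by exact_mod_cast hk
  have hcards : (A ∩ B).card + (A \ B).card = k := by
    rw [Finset.card_inter_add_card_sdiff, hcardA]
  have hfa : 1 - featAgree e1 e2 k = ((A \ B).card : ℝ) / k := by
    rw [featAgree, ← hA, ← hB]
    field_simp
    have : ((A ∩ B).card : ℝ) + ((A \ B).card : ℝ) = k := by exact_mod_cast hcards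
    linarith
  rw [hfa, lossFtr, ← hA]
  rw [div_le_iff₀ hk0]
  have hS : 0 ≤ ∑ i ∈ A, max 0 (psiFeat e1 e2 k ε - |e2 i| + ε) :=
    Finset.sum_nonneg fun i _ => le_max_left _ _
  have h1 : ((A \ B).card : ℝ) ≤ ε⁻¹ * ∑ i ∈ A, max 0 (psiFeat e1 e2 k ε - |e2 i| + ε) := by
    rw [le_inv_mul_iff₀ hε]
    exact hsum
  calc ((A \ B).card : ℝ)
      ≤ ε⁻¹ * ∑ i ∈ A, max 0 (psiFeat e1 e2 k ε - |e2 i| + ε) := h1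
    _ = ε⁻¹ * ((∑ i ∈ A, max 0 (psiFeat e1 e2 k ε - |e2 i| + ε)) / k) * k := by
        field_simp
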